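/- Let β = (π_ℓ)_{ℓ=1}^L be a chainable and non-redundant architecture. Then for all integers 1 ≤ q ≤ s < t ≤ L, the pair of patterns (π_q * ⋯ * π_s, π_{s+1} * ⋯ * π_t) is chainable and non-redundant. -/
import Mathlib



/-- A *pattern* is a tuple `(a, b, c, d)` of (positive) natural numbers. -/
structure Pattern where
  a : ℕ
  b : ℕ
  c : ℕ
  d : ℕ

namespace Pattern

/-- The entries of a pattern are positive integers. -/
def Pos (π : Pattern) : Prop := 0 < π.a ∧ 0 < π.b ∧ 0 < π.c ∧ 0 < π.d

/-- Number of rows `a*b*d` of a `π`-factor. -/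
def rows (π : Pattern) : ℕ := π.a * π.b * π.d

/-- Number of columns `a*c*d` of a `π`-factor. -/
def cols (π : Pattern) : ℕ := π.a * π.c * π.d

/-- `r(π₁, π₂) = a₁c₁/a₂ (= b₂d₂/d₁)`. -/
def rk (π₁ π₂ : Pattern) : ℕ := π₁.a * π₁.c / π₂.a

/-- A pair of patterns is *chainable* if `a₁c₁/a₂ = b₂d₂/d₁` is a positive integer,
`a₁ ∣ a₂` and `d₂ ∣ d₁`. -/
def Chainable (π₁ π₂ : Pattern) : Prop :=
  π₂.a ∣ π₁.a * π₁.c ∧ π₁.d ∣ π₂.b * π₂.d ∧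
    π₁.a * π₁.c / π₂.a = π₂.b * π₂.d / π₁.d ∧
    0 < π₁.a * π₁.c / π₂.a ∧ π₁.a ∣ π₂.a ∧ π₂.d ∣ π₁.d

/-- `π₁ * π₂ := (a₁, b₁d₁/d₂, a₂c₂/a₁, d₂)`. -/
instance : Mul Pattern :=
  ⟨fun π₁ π₂ => ⟨π₁.a, π₁.b * π₁.d / π₂.d, π₂.a * π₂.c / π₁.a, π₂.d⟩⟩

/-- `‖π‖₀ := a*b*c*d`. -/
def norm0 (π : Pattern) : ℕ := π.a * π.b * π.c * π.d

end Pattern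

/-- Partial products of patterns: `pprod π q k = π q * π (q+1) * ⋯ * π (q+k)`. -/
def pprod (π : ℕ → Pattern) (q : ℕ) : ℕ → Pattern
  | 0 => π q
  | k + 1 => pprod π q k * π (q + k + 1)

/-- A chainable pair is *redundant* if `r(π₁,π₂) ≥ min (b₁, c₂)`. -/
def RedundantPair (π₁ π₂ : Pattern) : Prop := min π₁.b π₂.c ≤ Pattern.rk π₁ π₂

-- component lemmas
lemma Pattern.mul_a (x y : Pattern) : (x * y).a = x.a := rfl
lemma Pattern.mul_b (x y : Pattern) : (x * y).b = x.b * x.d / y.d := rfl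
lemma Pattern.mul_c (x y : Pattern) : (x * y).c = y.a * y.c / x.a := rfl
lemma Pattern.mul_d (x y : Pattern) : (x * y).d = y.d := rfl

lemma pprod_a (π : ℕ → Pattern) (q : ℕ) : ∀ k, (pprod π q k).a = (π q).a
  | 0 => rfl
  | k+1 => by rw [pprod, Pattern.mul_a, pprod_a]

lemma pprod_d (π : ℕ → Pattern) (q : ℕ) : ∀ k, (pprod π q k).d = (π (q+k)).d
  | 0 => rfl
  | k+1 => by rw [pprod, Pattern.mul_d]; rfl

lemma pprod_c (π : ℕ → Pattern) (q : ℕ) (ha : 0 < (π q).a) :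
    ∀ k, (pprod π q k).c = (π (q+k)).a * (π (q+k)).c / (π q).a
  | 0 => by
      show (π q).c = (π q).a * (π q).c / (π q).a
      rw [Nat.mul_div_cancel_left _ ha]
  | k+1 => by rw [pprod, Pattern.mul_c, pprod_a]; rfl

lemma chain_a_dvd (π : ℕ → Pattern) (q : ℕ) :
    ∀ k, (∀ j < k, Pattern.Chainable (π (q+j)) (π (q+j+1))) → (π q).a ∣ (π (q+k)).a
  | 0, _ => dvd_rfl
  | k+1, h => dvd_trans (chain_a_dvd π q k (fun j hj => h j (Nat.lt_succ_of_lt hj)))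
      ((h k (Nat.lt_succ_self k)).2.2.2.2.1)

lemma chain_d_dvd (π : ℕ → Pattern) (q : ℕ) :
    ∀ k, (∀ j < k, Pattern.Chainable (π (q+j)) (π (q+j+1))) → (π (q+k)).d ∣ (π q).d
  | 0, _ => dvd_rfl
  | k+1, h => dvd_trans ((h k (Nat.lt_succ_self k)).2.2.2.2.2)
      (chain_d_dvd π q k (fun j hj => h j (Nat.lt_succ_of_lt hj)))

lemma pprod_b (π : ℕ → Pattern) (q : ℕ) (hd : 0 < (π q).d) :
    ∀ k, (∀ j < k, Pattern.Chainable (π (q+j)) (π (q+j+1))) →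
      (pprod π q k).b = (π q).b * (π q).d / (π (q+k)).d
  | 0, _ => by
      show (π q).b = (π q).b * (π q).d / (π q).d
      rw [Nat.mul_div_cancel _ hd]
  | k+1, h => by
      have hdvd : (π (q+k)).d ∣ (π q).b * (π q).d :=
        ((chain_d_dvd π q k (fun j hj => h j (Nat.lt_succ_of_lt hj)))).mul_left _
      rw [pprod, Pattern.mul_b, pprod_d,
        pprod_b π q hd k (fun j hj => h j (Nat.lt_succ_of_lt hj)),
        Nat.div_mul_cancel hdvd]; rfl

lemma bd_mono (π : ℕ → Pattern) (q : ℕ) :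
    ∀ k, (∀ j < k, Pattern.Chainable (π (q+j)) (π (q+j+1)) ∧
        ¬ RedundantPair (π (q+j)) (π (q+j+1))) →
      (π (q+k)).b * (π (q+k)).d ≤ (π q).b * (π q).d
  | 0, _ => le_refl _
  | k+1, h => by
      have hc := (h k (Nat.lt_succ_self k)).1
      have hn := (h k (Nat.lt_succ_self k)).2
      have hr : Pattern.rk (π (q+k)) (π (q+k+1)) < (π (q+k)).b :=
        lt_of_lt_of_le (Nat.lt_of_not_le hn) (min_le_left _ _)
      calc (π (q+k+1)).b * (π (q+k+1)).d
          = (π (q+k+1)).b * (π (q+k+1)).d / (π (q+k)).d * (π (q+k)).d :=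
            (Nat.div_mul_cancel hc.2.1).symm
        _ = Pattern.rk (π (q+k)) (π (q+k+1)) * (π (q+k)).d := by
            rw [Pattern.rk, hc.2.2.1]
        _ ≤ (π (q+k)).b * (π (q+k)).d := Nat.mul_le_mul_right _ (le_of_lt hr)
        _ ≤ (π q).b * (π q).d := bd_mono π q k (fun j hj => h j (Nat.lt_succ_of_lt hj))

lemma ac_mono (π : ℕ → Pattern) (q : ℕ) :
    ∀ k, (∀ j < k, Pattern.Chainable (π (q+j)) (π (q+j+1)) ∧
        ¬ RedundantPair (π (q+j)) (π (q+j+1))) →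
      (π q).a * (π q).c ≤ (π (q+k)).a * (π (q+k)).c
  | 0, _ => le_refl _
  | k+1, h => by
      have hc := (h k (Nat.lt_succ_self k)).1
      have hn := (h k (Nat.lt_succ_self k)).2
      have hr : Pattern.rk (π (q+k)) (π (q+k+1)) < (π (q+k+1)).c :=
        lt_of_lt_of_le (Nat.lt_of_not_le hn) (min_le_right _ _)
      calc (π q).a * (π q).c
          ≤ (π (q+k)).a * (π (q+k)).c := ac_mono π q k (fun j hj => h j (Nat.lt_succ_of_lt hj))
        _ = Pattern.rk (π (q+k)) (π (q+k+1)) * (π (q+k+1)).a :=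
            (Nat.div_mul_cancel hc.1).symm
        _ ≤ (π (q+k+1)).c * (π (q+k+1)).a := Nat.mul_le_mul_right _ (le_of_lt hr)
        _ = (π (q+k+1)).a * (π (q+k+1)).c := Nat.mul_comm _ _

/-- **Lemma.** If `β = (π 0, …, π (L-1))` is chainable and non-redundant then, for all
`0 ≤ q ≤ s < t ≤ L-1`, the pair `(π q * ⋯ * π s, π (s+1) * ⋯ * π t)` is chainable and
non-redundant. -/
theorem partial_products_nonredundant (L : ℕ) (π : ℕ → Pattern)
    (hPos : ∀ ℓ < L, (π ℓ).Pos)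
    (hch : ∀ ℓ, ℓ + 1 < L → Pattern.Chainable (π ℓ) (π (ℓ + 1)))
    (hnr : ∀ ℓ, ℓ + 1 < L → ¬ RedundantPair (π ℓ) (π (ℓ + 1))) :
    ∀ q s t : ℕ, q ≤ s → s < t → t < L →
      Pattern.Chainable (pprod π q (s - q)) (pprod π (s + 1) (t - (s + 1))) ∧
      ¬ RedundantPair (pprod π q (s - q)) (pprod π (s + 1) (t - (s + 1))) := by
  intro q s t hqs hst htL
  have hq1 : q + (s - q) = s := by omega
  have hs1 : (s + 1) + (t - (s + 1)) = t := by omega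
  have hsL : s + 1 < L := by omega
  -- positivity
  have hPq := hPos q (by omega)
  have hPs := hPos s (by omega)
  have hPs1 := hPos (s+1) (by omega)
  -- chain hypotheses for the two segments
  have hch1 : ∀ j < s - q, Pattern.Chainable (π (q+j)) (π (q+j+1)) :=
    fun j hj => hch (q+j) (by omega)
  have hcn1 : ∀ j < s - q, Pattern.Chainable (π (q+j)) (π (q+j+1)) ∧
      ¬ RedundantPair (π (q+j)) (π (q+j+1)) :=
    fun j hj => ⟨hch (q+j) (by omega), hnr (q+j) (by omega)⟩
  have hch2 : ∀ j < t - (s+1), Pattern.Chainable (π (s+1+j)) (π (s+1+j+1)) :=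
    fun j hj => hch (s+1+j) (by omega)
  have hcn2 : ∀ j < t - (s+1), Pattern.Chainable (π (s+1+j)) (π (s+1+j+1)) ∧
      ¬ RedundantPair (π (s+1+j)) (π (s+1+j+1)) :=
    fun j hj => ⟨hch (s+1+j) (by omega), hnr (s+1+j) (by omega)⟩
  -- chain divisibilities
  have haqs : (π q).a ∣ (π s).a := hq1 ▸ chain_a_dvd π q (s-q) hch1
  have hdsq : (π s).d ∣ (π q).d := hq1 ▸ chain_d_dvd π q (s-q) hch1
  have hast : (π (s+1)).a ∣ (π t).a := hs1 ▸ chain_a_dvd π (s+1) (t-(s+1)) hch2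
  have hdts : (π t).d ∣ (π (s+1)).d := hs1 ▸ chain_d_dvd π (s+1) (t-(s+1)) hch2
  set P := pprod π q (s - q) with hPdef
  set Q := pprod π (s + 1) (t - (s + 1)) with hQdef
  -- components
  have hPa : P.a = (π q).a := pprod_a π q _
  have hPd : P.d = (π s).d := hq1 ▸ pprod_d π q (s-q)
  have hPc : P.c = (π s).a * (π s).c / (π q).a := hq1 ▸ pprod_c π q hPq.1 (s-q)
  have hPb : P.b = (π q).b * (π q).d / (π s).d := hq1 ▸ pprod_b π q hPq.2.2.2 (s-q) hch1
  have hQa : Q.a = (π (s+1)).a := pprod_a π (s+1) _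
  have hQd : Q.d = (π t).d := hs1 ▸ pprod_d π (s+1) (t-(s+1))
  have hQc : Q.c = (π t).a * (π t).c / (π (s+1)).a :=
    hs1 ▸ pprod_c π (s+1) hPs1.1 (t-(s+1))
  have hQb : Q.b = (π (s+1)).b * (π (s+1)).d / (π t).d :=
    hs1 ▸ pprod_b π (s+1) hPs1.2.2.2 (t-(s+1)) hch2
  have hcs := hch s hsL
  -- products
  have hPac : P.a * P.c = (π s).a * (π s).c := by
    rw [hPa, hPc, Nat.mul_div_cancel' (haqs.mul_right _)]
  have hQbd : Q.b * Q.d = (π (s+1)).b * (π (s+1)).d := by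
    rw [hQb, hQd, Nat.div_mul_cancel (hdts.mul_left _)]
  refine ⟨⟨?_, ?_, ?_, ?_, ?_, ?_⟩, ?_⟩
  · rw [hPac, hQa]; exact hcs.1
  · rw [hPd, hQbd]; exact hcs.2.1
  · rw [hPac, hQa, hQbd, hPd]; exact hcs.2.2.1
  · rw [hPac, hQa]; exact hcs.2.2.2.1
  · rw [hPa, hQa]; exact dvd_trans haqs hcs.2.2.2.2.1
  · rw [hPd, hQd]; exact dvd_trans hdts hcs.2.2.2.2.2
  · -- non-redundancy
    intro hred
    have hrk : Pattern.rk P Q = Pattern.rk (π s) (π (s+1)) := by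
      rw [Pattern.rk, hPac, hQa]; rfl
    have hrlt : Pattern.rk (π s) (π (s+1)) < min (π s).b (π (s+1)).c :=
      Nat.lt_of_not_le (hnr s hsL)
    have hbP : (π s).b ≤ P.b := by
      rw [hPb]
      have h1 : (π s).b * (π s).d / (π s).d ≤ (π q).b * (π q).d / (π s).d :=
        Nat.div_le_div_right (hq1 ▸ bd_mono π q (s-q) hcn1)
      rwa [Nat.mul_div_cancel _ hPs.2.2.2] at h1
    have hcQ : (π (s+1)).c ≤ Q.c := by
      rw [hQc]
      have h1 : (π (s+1)).a * (π (s+1)).c / (π (s+1)).a ≤ (π t).a * (π t).c / (π (s+1)).a :=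
        Nat.div_le_div_right (hs1 ▸ ac_mono π (s+1) (t-(s+1)) hcn2)
      rwa [Nat.mul_div_cancel_left _ hPs1.1] at h1
    have : min (π s).b (π (s+1)).c ≤ min P.b Q.c :=
      le_min (le_trans (min_le_left _ _) hbP) (le_trans (min_le_right _ _) hcQ)
    rw [RedundantPair, hrk] at hred
    omega
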